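/- For every real c with 3 < c < 4, there is no sequence (b_t)_{t ∈ ℕ} of real numbers satisfying b_t > 1 for all t and b_{t+1} = c·(1 − 1/b_t) for all t. Equivalently, for every real sequence with b_{t+1} = c·(1 − 1/b_t) (whenever defined) there exists an index t with b_t ≤ 1. -/

import Mathlib

/-- For every real `c` with `3 < c < 4`, there is no sequence `(b t)` of real
numbers with `b t > 1` for all `t` and `b (t+1) = c * (1 - 1 / b t)` for all `t`. -/
theorem stmt16 (c : ℝ) (hc3 : 3 < c) (hc4 : c < 4) :
    ¬ ∃ b : ℕ → ℝ, (∀ t, 1 < b t) ∧ ∀ t, b (t + 1) = c * (1 - 1 / b t) := by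
  rintro ⟨b, h1, hrec⟩
  have hδpos : 0 < c - c ^ 2 / 4 := by nlinarith
  have hb0 : (1 : ℝ) < b 0 := h1 0
  have hb0pos : (0 : ℝ) < b 0 := by linarith
  have key : ∀ t : ℕ, b t ≤ b 0 - t * ((c - c ^ 2 / 4) / b 0) := by
    intro t
    induction t with
    | zero => simp
    | succ n ih =>
      have hbn : 1 < b n := h1 n
      have hbnpos : 0 < b n := by linarith
      have hle : b n ≤ b 0 := by
        have : 0 ≤ (n : ℝ) * ((c - c ^ 2 / 4) / b 0) := by positivity
        linarith
      have hquad : c - c ^ 2 / 4 ≤ b n ^ 2 - c * b n + c := by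
        nlinarith [sq_nonneg (b n - c / 2)]
      have hstep : b (n + 1) ≤ b n - (c - c ^ 2 / 4) / b 0 := by
        rw [hrec n]
        have e : c * (1 - 1 / b n) = (c * b n - c) / b n := by field_simp
        rw [e, div_le_iff₀ hbnpos]
        have h2 : (c - c ^ 2 / 4) / b 0 * b n ≤ c - c ^ 2 / 4 := by
          rw [div_mul_eq_mul_div, div_le_iff₀ hb0pos]
          nlinarith
        nlinarith
      push_cast
      linarith
  obtain ⟨n, hn⟩ := exists_nat_gt ((b 0 - 1) * b 0 / (c - c ^ 2 / 4))
  rw [div_lt_iff₀ hδpos] at hn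
  have hlt : b 0 - n * ((c - c ^ 2 / 4) / b 0) < 1 := by
    rw [sub_lt_iff_lt_add, ← sub_lt_iff_lt_add']
    rw [div_eq_mul_inv, ← mul_assoc, lt_mul_inv_iff₀ hb0pos]
    nlinarith
  have := key n
  have := h1 n
  linarith
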